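/- Let d ≥ 1, D ⊂ ℝ^d be a bounded set containing 0, d̄ := diam(D), and M ≥ 0 with |b(x)| ≤ M for all x ∈ D, where b : D → ℝ^d. Let π : ℝ^d × ℝ^d → [0,∞) be measurable with ∫_{ℝ^d}(|z|² ∧ 1)π(x,z)dz < ∞ and ∫_{|z|>1}|z| π(x,z)dz < ∞ for every x ∈ D. Suppose R > max(1, 2d̄, 2M) satisfies inf_{x∈D} ∫_{|z|≤R} |z|² π(x,z) dz ≥ 1 + 2 d̄ M + 2 d̄ · sup_{x∈D} ∫_{1<|z|≤R} |z| π(x,z) dz. Let f ∈ C²(ℝ^d) be bounded and radially nondecreasing (f(x) = h(|x|) with h nondecreasing) with f(x) = |x|² for |x| ≤ 2R and f(x) = 8R² for |x| ≥ 2R+1. Then for every x ∈ D, b(x)·∇f(x) + ∫_{ℝ^d} 𝔡f(x;z) π(x,z) dz ≥ 1. -/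

import Mathlib

open MeasureTheory
open scoped ENNReal

/-- The compensated increment `𝔡f(x;z) = f(x+z) - f(x) - 𝟙_{‖z‖≤1} ∇f(x)·z`. -/
noncomputable def jumpIncrement {d : ℕ} (f : EuclideanSpace ℝ (Fin d) → ℝ)
    (x z : EuclideanSpace ℝ (Fin d)) : ℝ :=
  f (x + z) - f x - (if ‖z‖ ≤ 1 then fderiv ℝ f x z else 0)

set_option maxHeartbeats 1000000 in
theorem stmt6 (d : ℕ) (hd : 1 ≤ d)
    (D : Set (EuclideanSpace ℝ (Fin d))) (hDbdd : Bornology.IsBounded D)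
    (hD0 : (0 : EuclideanSpace ℝ (Fin d)) ∈ D)
    (b : EuclideanSpace ℝ (Fin d) → EuclideanSpace ℝ (Fin d))
    (M : ℝ) (hM : 0 ≤ M) (hbM : ∀ x ∈ D, ‖b x‖ ≤ M)
    (π : EuclideanSpace ℝ (Fin d) → EuclideanSpace ℝ (Fin d) → ℝ)
    (hπmeas : Measurable (Function.uncurry π)) (hπnn : ∀ x z, 0 ≤ π x z)
    (hπint : ∀ x ∈ D,
      (∫⁻ z, ENNReal.ofReal (min (‖z‖ ^ 2) 1 * π x z)) < ⊤)
    (hπint2 : ∀ x ∈ D,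
      (∫⁻ z in {z : EuclideanSpace ℝ (Fin d) | 1 < ‖z‖},
        ENNReal.ofReal (‖z‖ * π x z)) < ⊤)
    (R : ℝ) (hR : max 1 (max (2 * Metric.diam D) (2 * M)) < R)
    (hRbig : ∀ x ∈ D, ∀ y ∈ D,
      1 + 2 * Metric.diam D * M +
          2 * Metric.diam D *
            ∫ z in {z : EuclideanSpace ℝ (Fin d) | 1 < ‖z‖ ∧ ‖z‖ ≤ R}, ‖z‖ * π y z ≤
        ∫ z in {z : EuclideanSpace ℝ (Fin d) | ‖z‖ ≤ R}, ‖z‖ ^ 2 * π x z)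
    (f : EuclideanSpace ℝ (Fin d) → ℝ) (hf : ContDiff ℝ 2 f)
    (hfbdd : ∃ Cf : ℝ, ∀ x, |f x| ≤ Cf)
    (hfrad : ∃ h : ℝ → ℝ, Monotone h ∧ ∀ x, f x = h ‖x‖)
    (hfeq : ∀ x : EuclideanSpace ℝ (Fin d), ‖x‖ ≤ 2 * R → f x = ‖x‖ ^ 2)
    (hfout : ∀ x : EuclideanSpace ℝ (Fin d), 2 * R + 1 ≤ ‖x‖ → f x = 8 * R ^ 2) :
    ∀ x ∈ D, 1 ≤ fderiv ℝ f x (b x) + ∫ z, jumpIncrement f x z * π x z := by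
  obtain ⟨Cf, hCf⟩ := hfbdd
  obtain ⟨h, hhmono, hhf⟩ := hfrad
  intro x hx
  have hdnn : (0:ℝ) ≤ Metric.diam D := Metric.diam_nonneg
  set dbar := Metric.diam D with hdbar
  have hR1 : (1:ℝ) < R := lt_of_le_of_lt (le_max_left _ _) hR
  have hRd : 2 * dbar < R := lt_of_le_of_lt ((le_max_left _ _).trans (le_max_right _ _)) hR
  have hRM : 2 * M < R := lt_of_le_of_lt ((le_max_right _ _).trans (le_max_right _ _)) hR
  have hR0 : (0:ℝ) < R := lt_trans one_pos hR1
  have hnormD : ∀ y ∈ D, ‖y‖ ≤ dbar := fun y hy => by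
    simpa [dist_zero_right] using Metric.dist_le_diam_of_mem hDbdd hy hD0
  have hxd : ‖x‖ ≤ dbar := hnormD x hx
  have hx2R : ‖x‖ < 2 * R := lt_of_le_of_lt hxd (by linarith)
  -- derivative of f inside the ball of radius 2R
  have hfd : ∀ y : EuclideanSpace ℝ (Fin d), ‖y‖ < 2 * R →
      fderiv ℝ f y = 2 • (innerSL ℝ y) := by
    intro y hy
    have hmem : Metric.ball (0 : EuclideanSpace ℝ (Fin d)) (2*R) ∈ nhds y := by
      apply Metric.isOpen_ball.mem_nhds
      simpa [Metric.mem_ball, dist_zero_right] using hy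
    have h1 : f =ᶠ[nhds y] fun w => ‖w‖^2 := by
      filter_upwards [hmem] with w hw
      exact hfeq w (le_of_lt (by simpa [Metric.mem_ball, dist_zero_right] using hw))
    have h2 : HasFDerivAt (fun w : EuclideanSpace ℝ (Fin d) => ‖w‖^2)
        (2 • (innerSL ℝ y)) y := (hasStrictFDerivAt_norm_sq y).hasFDerivAt
    rw [h1.fderiv_eq, h2.fderiv]
  have hfdx : fderiv ℝ f x = 2 • (innerSL ℝ x) := hfd x hx2R
  have hfdapp : ∀ z, fderiv ℝ f x z = 2 * (inner ℝ x z : ℝ) := by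
    intro z
    rw [hfdx]
    simp
  have hπxmeas : Measurable (π x) := hπmeas.of_uncurry_left
  -- pointwise values of the jump increment
  have hjump1 : ∀ z : EuclideanSpace ℝ (Fin d), ‖z‖ ≤ 1 →
      jumpIncrement f x z = ‖z‖^2 := by
    intro z hz
    have hxz : ‖x + z‖ ≤ 2 * R := by
      calc ‖x + z‖ ≤ ‖x‖ + ‖z‖ := norm_add_le x z
        _ ≤ dbar + 1 := add_le_add hxd hz
        _ ≤ 2 * R := by linarith
    simp only [jumpIncrement, if_pos hz]
    rw [hfeq _ hxz, hfeq x hx2R.le, hfdapp, norm_add_sq_real]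
    ring
  have hjump2 : ∀ z : EuclideanSpace ℝ (Fin d), 1 < ‖z‖ → ‖z‖ ≤ R →
      jumpIncrement f x z = ‖z‖^2 + 2 * (inner ℝ x z : ℝ) := by
    intro z hz1 hzR
    have hxz : ‖x + z‖ ≤ 2 * R := by
      calc ‖x + z‖ ≤ ‖x‖ + ‖z‖ := norm_add_le x z
        _ ≤ dbar + R := add_le_add hxd hzR
        _ ≤ 2 * R := by linarith
    simp only [jumpIncrement, if_neg (not_le.2 hz1), sub_zero]
    rw [hfeq _ hxz, hfeq x hx2R.le, norm_add_sq_real]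
    ring
  have hjump3 : ∀ z : EuclideanSpace ℝ (Fin d), R < ‖z‖ →
      0 ≤ jumpIncrement f x z := by
    intro z hz
    have h1 : ¬ ‖z‖ ≤ 1 := not_le.2 (lt_trans hR1 hz)
    have h2 : ‖z‖ ≤ ‖x + z‖ + ‖x‖ := by
      calc ‖z‖ = ‖(x + z) - x‖ := by rw [add_sub_cancel_left]
        _ ≤ ‖x + z‖ + ‖x‖ := norm_sub_le _ _
    have hge : ‖x‖ ≤ ‖x + z‖ := by linarith
    simp only [jumpIncrement, if_neg h1, sub_zero]
    rw [hhf (x+z), hhf x]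
    exact sub_nonneg.2 (hhmono hge)
  -- integrability facts
  have hmin_nn : ∀ z : EuclideanSpace ℝ (Fin d), 0 ≤ min (‖z‖^2) 1 * π x z := fun z =>
    mul_nonneg (le_min (sq_nonneg _) zero_le_one) (hπnn x z)
  have Imin : Integrable (fun z : EuclideanSpace ℝ (Fin d) => min (‖z‖^2) 1 * π x z) := by
    refine ⟨(((measurable_norm.pow_const 2).min measurable_const).mul
      hπxmeas).aestronglyMeasurable, ?_⟩
    rw [hasFiniteIntegral_iff_ofReal (ae_of_all _ hmin_nn)]
    exact hπint x hx
  have hSgt : MeasurableSet {z : EuclideanSpace ℝ (Fin d) | 1 < ‖z‖} :=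
    measurableSet_lt measurable_const measurable_norm
  have hSle : MeasurableSet {z : EuclideanSpace ℝ (Fin d) | ‖z‖ ≤ R} :=
    measurableSet_le measurable_norm measurable_const
  have hSmid : MeasurableSet {z : EuclideanSpace ℝ (Fin d) | 1 < ‖z‖ ∧ ‖z‖ ≤ R} :=
    hSgt.inter hSle
  have Igt : IntegrableOn (fun z : EuclideanSpace ℝ (Fin d) => ‖z‖ * π x z)
      {z | 1 < ‖z‖} := by
    refine ⟨(measurable_norm.mul hπxmeas).aestronglyMeasurable, ?_⟩
    rw [hasFiniteIntegral_iff_ofReal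
      (ae_of_all _ fun z => mul_nonneg (norm_nonneg _) (hπnn x z))]
    exact hπint2 x hx
  have Imid : IntegrableOn (fun z : EuclideanSpace ℝ (Fin d) => ‖z‖ * π x z)
      {z | 1 < ‖z‖ ∧ ‖z‖ ≤ R} := Igt.mono_set (fun z hz => hz.1)
  -- the two indicator pieces
  have Iφ1 : Integrable (Set.indicator {z : EuclideanSpace ℝ (Fin d) | ‖z‖ ≤ R}
      (fun z => ‖z‖^2 * π x z)) := by
    refine (Imin.const_mul (max 1 (R^2))).mono'
      ((((measurable_norm.pow_const 2).mul hπxmeas).indicator hSle).aestronglyMeasurable)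
      (ae_of_all _ fun z => ?_)
    rw [Real.norm_eq_abs]
    by_cases hz : ‖z‖ ≤ R
    · rw [Set.indicator_of_mem (show z ∈ {z : EuclideanSpace ℝ (Fin d) | ‖z‖ ≤ R} from hz), abs_of_nonneg (mul_nonneg (sq_nonneg _) (hπnn x z))]
      by_cases h1 : ‖z‖ ≤ 1
      · have hm : min (‖z‖^2) 1 = ‖z‖^2 := min_eq_left (by nlinarith [norm_nonneg z])
        rw [hm]
        have hK : (1:ℝ) ≤ max 1 (R^2) := le_max_left _ _
        nlinarith [mul_nonneg (sq_nonneg ‖z‖) (hπnn x z)]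
      · have hm : min (‖z‖^2) 1 = 1 := min_eq_right (by nlinarith [not_le.1 h1])
        rw [hm]
        have h2 : ‖z‖^2 ≤ R^2 := by nlinarith [norm_nonneg z]
        have h3 : R^2 ≤ max 1 (R^2) := le_max_right _ _
        nlinarith [hπnn x z]
    · rw [Set.indicator_of_notMem (show z ∉ {z : EuclideanSpace ℝ (Fin d) | ‖z‖ ≤ R} from hz), abs_zero]
      exact mul_nonneg (le_trans zero_le_one (le_max_left _ _)) (hmin_nn z)
  have Iφ2 : Integrable (Set.indicator {z : EuclideanSpace ℝ (Fin d) | 1 < ‖z‖ ∧ ‖z‖ ≤ R}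
      (fun z => 2 * dbar * (‖z‖ * π x z))) :=
    IntegrableOn.integrable_indicator
      (show IntegrableOn (fun z : EuclideanSpace ℝ (Fin d) => 2 * dbar * (‖z‖ * π x z))
        {z | 1 < ‖z‖ ∧ ‖z‖ ≤ R} volume from Imid.const_mul (2*dbar)) hSmid
  -- integrability of the full integrand
  set K := max 1 (max (R + 2*dbar) (2*Cf)) with hKdef
  have hK1 : (1:ℝ) ≤ K := le_max_left _ _
  have hK0 : (0:ℝ) ≤ K := le_trans zero_le_one hK1
  have hjmeas : Measurable (fun z : EuclideanSpace ℝ (Fin d) => jumpIncrement f x z) := by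
    have hc : Continuous f := hf.continuous
    simp only [jumpIncrement]
    refine ((hc.comp (continuous_const.add continuous_id)).measurable.sub
      measurable_const).sub ?_
    exact Measurable.ite (measurableSet_le measurable_norm measurable_const)
      (fderiv ℝ f x).continuous.measurable measurable_const
  have Idom : Integrable (fun z : EuclideanSpace ℝ (Fin d) =>
      K * (min (‖z‖^2) 1 * π x z) +
      Set.indicator {z : EuclideanSpace ℝ (Fin d) | 1 < ‖z‖}
        (fun z => K * (‖z‖ * π x z)) z) :=
    (Imin.const_mul K).add (IntegrableOn.integrable_indicator
      (show IntegrableOn (fun z : EuclideanSpace ℝ (Fin d) => K * (‖z‖ * π x z))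
        {z | 1 < ‖z‖} volume from Igt.const_mul K) hSgt)
  have Ig : Integrable (fun z : EuclideanSpace ℝ (Fin d) =>
      jumpIncrement f x z * π x z) := by
    refine Idom.mono' (hjmeas.mul hπxmeas).aestronglyMeasurable (ae_of_all _ fun z => ?_)
    rw [Real.norm_eq_abs, abs_mul, abs_of_nonneg (hπnn x z)]
    rcases le_or_gt ‖z‖ 1 with h1 | h1
    · rw [Set.indicator_of_notMem (show z ∉ {z : EuclideanSpace ℝ (Fin d) | 1 < ‖z‖} from not_lt.2 h1), hjump1 z h1,
        abs_of_nonneg (sq_nonneg _)]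
      have hm : min (‖z‖^2) 1 = ‖z‖^2 := min_eq_left (by nlinarith [norm_nonneg z])
      rw [hm, add_zero]
      nlinarith [mul_nonneg (sq_nonneg ‖z‖) (hπnn x z)]
    · rw [Set.indicator_of_mem (show z ∈ {z : EuclideanSpace ℝ (Fin d) | 1 < ‖z‖} from h1)]
      have hm : min (‖z‖^2) 1 = 1 := min_eq_right (by nlinarith)
      rw [hm]
      have hπz := hπnn x z
      have hKπ : 0 ≤ K * (1 * π x z) := mul_nonneg hK0 (by linarith)
      rcases le_or_gt ‖z‖ R with h2 | h2
      · rw [hjump2 z h1 h2]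
        have hIa : |(inner ℝ x z : ℝ)| ≤ dbar * ‖z‖ :=
          le_trans (abs_real_inner_le_norm x z)
            (mul_le_mul_of_nonneg_right hxd (norm_nonneg z))
        have hj : |‖z‖^2 + 2*(inner ℝ x z : ℝ)| ≤ K * ‖z‖ := by
          have h3 : ‖z‖^2 ≤ R * ‖z‖ := by nlinarith [norm_nonneg z]
          have h4 : R + 2*dbar ≤ K := le_trans (le_max_left _ _) (le_max_right _ _)
          have h5 : |‖z‖^2 + 2*(inner ℝ x z:ℝ)| ≤ ‖z‖^2 + 2*(dbar*‖z‖) := by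
            calc |‖z‖^2 + 2*(inner ℝ x z:ℝ)| ≤ |‖z‖^2| + |2*(inner ℝ x z:ℝ)| := abs_add_le _ _
              _ = ‖z‖^2 + 2*|(inner ℝ x z:ℝ)| := by
                  rw [abs_of_nonneg (sq_nonneg _), abs_mul, abs_two]
              _ ≤ ‖z‖^2 + 2*(dbar*‖z‖) := by linarith
          nlinarith [norm_nonneg z]
        have := mul_le_mul_of_nonneg_right hj hπz
        nlinarith
      · have h1' : ¬ ‖z‖ ≤ 1 := not_le.2 h1
        simp only [jumpIncrement, if_neg h1', sub_zero]
        have h4 : 2*Cf ≤ K := le_trans (le_max_right _ _) (le_max_right _ _)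
        have ha := abs_le.1 (hCf (x+z))
        have hb := abs_le.1 (hCf x)
        have hj : |f (x+z) - f x| ≤ K := abs_le.2 ⟨by linarith, by linarith⟩
        have hj2 : |f (x+z) - f x| ≤ K * ‖z‖ := by nlinarith [abs_nonneg (f (x+z) - f x)]
        have := mul_le_mul_of_nonneg_right hj2 hπz
        nlinarith
  -- the minorant φ
  set φ : EuclideanSpace ℝ (Fin d) → ℝ := fun z =>
    Set.indicator {z : EuclideanSpace ℝ (Fin d) | ‖z‖ ≤ R} (fun z => ‖z‖^2 * π x z) z -
    Set.indicator {z : EuclideanSpace ℝ (Fin d) | 1 < ‖z‖ ∧ ‖z‖ ≤ R}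
      (fun z => 2 * dbar * (‖z‖ * π x z)) z with hφdef
  have Iφ : Integrable φ := Iφ1.sub Iφ2
  have hφle : ∀ z, φ z ≤ jumpIncrement f x z * π x z := by
    intro z
    simp only [hφdef]
    rcases le_or_gt ‖z‖ 1 with h1 | h1
    · rw [Set.indicator_of_mem (show z ∈ {z : EuclideanSpace ℝ (Fin d) | ‖z‖ ≤ R} from le_trans h1 hR1.le),
        Set.indicator_of_notMem (show z ∉ {z : EuclideanSpace ℝ (Fin d) | 1 < ‖z‖ ∧ ‖z‖ ≤ R} from fun hc => absurd hc.1 (not_lt.2 h1)),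
        hjump1 z h1, sub_zero]
    · rcases le_or_gt ‖z‖ R with h2 | h2
      · rw [Set.indicator_of_mem (show z ∈ {z : EuclideanSpace ℝ (Fin d) | ‖z‖ ≤ R} from h2),
          Set.indicator_of_mem (show z ∈ {z : EuclideanSpace ℝ (Fin d) | 1 < ‖z‖ ∧ ‖z‖ ≤ R} from ⟨h1, h2⟩),
          hjump2 z h1 h2]
        have hIa : |(inner ℝ x z : ℝ)| ≤ dbar * ‖z‖ :=
          le_trans (abs_real_inner_le_norm x z)
            (mul_le_mul_of_nonneg_right hxd (norm_nonneg z))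
        have hIa' : -(dbar*‖z‖) ≤ (inner ℝ x z : ℝ) := by
          have := neg_abs_le (inner ℝ x z : ℝ); linarith
        have hπz := hπnn x z
        nlinarith [mul_le_mul_of_nonneg_right
          (show ‖z‖^2 - 2*dbar*‖z‖ ≤ ‖z‖^2 + 2*(inner ℝ x z:ℝ) by linarith) hπz]
      · rw [Set.indicator_of_notMem (show z ∉ {z : EuclideanSpace ℝ (Fin d) | ‖z‖ ≤ R} from not_le.2 h2),
          Set.indicator_of_notMem (show z ∉ {z : EuclideanSpace ℝ (Fin d) | 1 < ‖z‖ ∧ ‖z‖ ≤ R} from fun hc => absurd hc.2 (not_le.2 h2)), sub_zero]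
        exact mul_nonneg (hjump3 z h2) (hπnn x z)
  have hφint : ∫ z, φ z =
      (∫ z in {z : EuclideanSpace ℝ (Fin d) | ‖z‖ ≤ R}, ‖z‖^2 * π x z) -
      2 * dbar * ∫ z in {z : EuclideanSpace ℝ (Fin d) | 1 < ‖z‖ ∧ ‖z‖ ≤ R},
        ‖z‖ * π x z := by
    simp only [hφdef]
    rw [integral_sub Iφ1 Iφ2, integral_indicator hSle, integral_indicator hSmid,
      integral_const_mul]
  have hmono : ∫ z, φ z ≤ ∫ z, jumpIncrement f x z * π x z := integral_mono Iφ Ig hφle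
  have hAB := hRbig x hx x hx
  have hfdb : -(2*dbar*M) ≤ fderiv ℝ f x (b x) := by
    rw [hfdapp]
    have h5 : |(inner ℝ x (b x) : ℝ)| ≤ dbar * M :=
      le_trans (abs_real_inner_le_norm x (b x))
        (mul_le_mul hxd (hbM x hx) (norm_nonneg _) hdnn)
    have := neg_abs_le (inner ℝ x (b x) : ℝ)
    linarith
  rw [hφint] at hmono
  linarith
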